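/- Let AV = VH + re_mᵀ with H ∈ ℝ^{m×m} unreduced upper Hessenberg, and let ψ be a polynomial of degree at most p = m - k. Then ψ(A) V [e₁,…,e_k] = V ψ(H) [e₁,…,e_k]; that is, the first k columns of ψ(A)V and Vψ(H) coincide. -/
import Mathlib


open Matrix Polynomial

theorem stmt17 {n k p : ℕ} (hk : 0 < k)
    (A : Matrix (Fin n) (Fin n) ℝ) (V : Matrix (Fin n) (Fin (k + p)) ℝ)
    (H : Matrix (Fin (k + p)) (Fin (k + p)) ℝ) (r : Fin n → ℝ)
    (hhess : ∀ i j : Fin (k + p), (j : ℕ) + 1 < (i : ℕ) → H i j = 0)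
    (hunred : ∀ i j : Fin (k + p), (i : ℕ) = (j : ℕ) + 1 → 0 < H i j)
    (hfact : A * V = V * H + Matrix.vecMulVec r (Pi.single ⟨k + p - 1, by omega⟩ 1))
    (ψ : Polynomial ℝ) (hdeg : ψ.natDegree ≤ p) :
    ∀ j : Fin (k + p), (j : ℕ) < k →
      ∀ i : Fin n, ((aeval A ψ) * V) i j = (V * (aeval H ψ)) i j := by
  have key : ∀ d : ℕ, ∀ j : Fin (k + p), (j : ℕ) + d < k + p →
      ∀ i : Fin n, (A ^ d * V) i j = (V * H ^ d) i j := by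
    intro d
    induction d with
    | zero => intro j _ i; simp
    | succ d ih =>
      intro j hj i
      have hAV : A ^ (d + 1) * V =
          A ^ d * (V * H) + A ^ d * Matrix.vecMulVec r (Pi.single ⟨k + p - 1, by omega⟩ 1) := by
        rw [pow_succ, Matrix.mul_assoc, hfact, Matrix.mul_add]
      have h2 : (A ^ d * Matrix.vecMulVec r
          (Pi.single (⟨k + p - 1, by omega⟩ : Fin (k + p)) 1)) i j = 0 := by
        rw [Matrix.mul_apply]
        apply Finset.sum_eq_zero
        intro l _
        rw [Matrix.vecMulVec_apply]
        have hne : j ≠ (⟨k + p - 1, by omega⟩ : Fin (k + p)) :=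
          Fin.ne_of_val_ne (by simp; omega)
        rw [Pi.single_eq_of_ne hne, mul_zero, mul_zero]
      have h3 : (A ^ d * (V * H)) i j = (V * H ^ (d + 1)) i j := by
        rw [← Matrix.mul_assoc, Matrix.mul_apply]
        have : (V * H ^ (d + 1)) i j = ∑ l, (V * H ^ d) i l * H l j := by
          rw [pow_succ, ← Matrix.mul_assoc, Matrix.mul_apply]
        rw [this]
        apply Finset.sum_congr rfl
        intro l _
        by_cases hl : (j : ℕ) + 1 < (l : ℕ)
        · rw [hhess l j hl, mul_zero, mul_zero]
        · rw [ih l (by omega) i]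
      rw [hAV, Matrix.add_apply, h2, add_zero, h3]
  intro j hj i
  rw [aeval_eq_sum_range, aeval_eq_sum_range, Matrix.sum_mul, Matrix.mul_sum]
  simp only [Matrix.sum_apply, Matrix.smul_mul, Matrix.mul_smul, Matrix.smul_apply,
    smul_eq_mul]
  apply Finset.sum_congr rfl
  intro d hd
  have hd' : d ≤ ψ.natDegree := by
    have := Finset.mem_range.mp hd; omega
  rw [key d j (by omega) i]
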